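/- arXiv:1407.2385 — 2 statements merged into one kernel-verified Lean document; each statement's English description precedes it below -/
import Mathlib

section
/- Let Λ be a K-algebra, U a Λ-module, y ∈ U, and γ, α ∈ Λ. Fix μ ≥ 1 and suppose γ^{μ+1}·y = 0, the element α·γ^μ·y is nonzero, and there are scalars k_0, …, k_{μ−1} ∈ K with α·γ^i·y = k_i·α·γ^μ·y for all 0 ≤ i ≤ μ−1. Then there exist scalars c_1, …, c_μ ∈ K such that the element x = y + Σ_{j=1}^{μ} c_j·γ^j·y satisfies α·γ^i·x = 0 for all 0 ≤ i ≤ μ−1. -/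
noncomputable def auxc (K : Type) [Field K] (k : ℕ → K) (μ : ℕ) : ℕ → K
  | m => -(k (μ - m) + ∑ j ∈ (Finset.Icc 1 (m - 1)).attach,
      auxc K k μ j.1 * k (μ - m + j.1))
  decreasing_by
    have := Finset.mem_Icc.mp j.2; omega

/-- Let `Λ` be a `K`-algebra, `U` a `Λ`-module, `y ∈ U` and `γ, α ∈ Λ`.  If
`γ^{μ+1}·y = 0`, `α·γ^μ·y ≠ 0` and `α·γ^i·y = k_i·α·γ^μ·y` for scalars `k_i`
(`0 ≤ i ≤ μ−1`), then there are scalars `c_1, …, c_μ` such that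
`x = y + Σ_{j=1}^{μ} c_j·γ^j·y` satisfies `α·γ^i·x = 0` for all `0 ≤ i ≤ μ−1`. -/

theorem top_element_change (K Λ U : Type) [Field K] [Ring Λ] [Algebra K Λ]
    [AddCommGroup U] [Module Λ U] [Module K U] [IsScalarTower K Λ U]
    (y : U) (γ α : Λ) (μ : ℕ) (hμ : 1 ≤ μ)
    (hnil : (γ ^ (μ + 1)) • y = 0)
    (hne : (α * γ ^ μ) • y ≠ 0)
    (k : ℕ → K)
    (hk : ∀ i : ℕ, i ≤ μ - 1 → (α * γ ^ i) • y = k i • ((α * γ ^ μ) • y)) :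
    ∃ c : ℕ → K, ∀ i : ℕ, i ≤ μ - 1 →
      (α * γ ^ i) • (y + ∑ j ∈ Finset.Icc 1 μ, c j • ((γ ^ j) • y)) = 0 := by
  set w := (α * γ ^ μ) • y with hw
  set k' : ℕ → K := fun i => if i < μ then k i else if i = μ then 1 else 0 with hk'def
  have hk' : ∀ i : ℕ, (α * γ ^ i) • y = k' i • w := by
    intro i
    rcases lt_trichotomy i μ with h | h | h
    · rw [hk'def]; simp only [if_pos h]; exact hk i (by omega)
    · subst h; rw [hk'def]; simp [hw]
    · have : (α * γ ^ i) • y = 0 := by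
        have : γ ^ i = γ ^ (i - (μ + 1)) * γ ^ (μ + 1) := by
          rw [← pow_add]; congr 1; omega
        rw [this, ← mul_assoc, mul_smul, hnil, smul_zero]
      rw [this, hk'def]; simp only
      rw [if_neg (by omega), if_neg (by omega), zero_smul]
  set c := auxc K k μ with hc
  refine ⟨c, fun i hi => ?_⟩
  have hiμ : i < μ := by omega
  have hterm : ∀ j : ℕ, (α * γ ^ i) • (c j • ((γ ^ j) • y))
      = (c j * k' (i + j)) • w := by
    intro j
    rw [smul_comm, ← mul_smul, mul_assoc, ← pow_add, hk' (i + j), smul_smul]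
  rw [smul_add, Finset.smul_sum]
  simp only [hterm]
  rw [hk' i, ← Finset.sum_smul, ← add_smul]
  have hsub : ∑ j ∈ Finset.Icc 1 μ, c j * k' (i + j)
      = ∑ j ∈ Finset.Icc 1 (μ - i), c j * k' (i + j) := by
    refine (Finset.sum_subset ?_ ?_).symm
    · intro j hj; simp only [Finset.mem_Icc] at *; omega
    · intro j hj hj2
      simp only [Finset.mem_Icc] at hj hj2
      have : ¬ (i + j < μ) := by omega
      have h2 : ¬ (i + j = μ) := by omega
      rw [hk'def]; simp only
      rw [if_neg this, if_neg h2, mul_zero]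
  rw [hsub]
  have hsplit : Finset.Icc 1 (μ - i) = insert (μ - i) (Finset.Icc 1 (μ - i - 1)) := by
    ext j; simp only [Finset.mem_insert, Finset.mem_Icc]; omega
  rw [hsplit, Finset.sum_insert (by simp only [Finset.mem_Icc]; omega)]
  have hktop : k' (i + (μ - i)) = 1 := by
    rw [hk'def]; simp only
    rw [if_neg (by omega), if_pos (by omega)]
  rw [hktop, mul_one]
  have hcdef : c (μ - i) = -(k i + ∑ j ∈ Finset.Icc 1 (μ - i - 1), c j * k' (i + j)) := by
    rw [hc, auxc]
    rw [Finset.sum_attach (Finset.Icc 1 (μ - i - 1)) (fun j => auxc K k μ j * k (μ - (μ - i) + j))]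
    have : μ - (μ - i) = i := by omega
    rw [this]
    congr 1
    congr 1
    refine Finset.sum_congr rfl (fun j hj => ?_)
    simp only [Finset.mem_Icc] at hj
    rw [hk'def]; simp only
    rw [if_pos (by omega)]
  rw [hcdef]
  have : k' i = k i := by rw [hk'def]; simp only; rw [if_pos hiμ]
  rw [this]
  have hz : (k i + (-(k i + ∑ j ∈ Finset.Icc 1 (μ - i - 1), c j * k' (i + j)) +
      ∑ j ∈ Finset.Icc 1 (μ - i - 1), c j * k' (i + j))) = 0 := by ring
  rw [hz, zero_smul]
end

section
/- Let Γ be a quiver and p a path starting at a vertex e. Let w be a path of positive length from e to e. Suppose u and r are initial subpaths of p, and α, β are arrows such that: α·u and β·r are NOT initial subpaths of p, but both α·u·w and β·r·w ARE initial subpaths of p. Then u = r and α = β. -/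
open Quiver

/-- Among two initial subpaths of the same path, the shorter is an initial
subpath of the longer. -/
lemma path_prefix_of_le {V : Type} [Quiver V] {a b c c' : V}
    (u : Path a c) (v : Path a c') (u' : Path c b) (v' : Path c' b)
    (h : u.comp u' = v.comp v') (hl : u.length ≤ v.length) :
    ∃ s : Path c c', v = u.comp s ∧ u' = s.comp v' := by
  induction v' with
  | nil =>
      exact ⟨u', by simpa using h.symm, by simp⟩
  | cons v'' γ ih =>
      cases u' with
      | nil =>
          exfalso
          have := congrArg Path.length h
          simp [Path.length_comp] at this
          omega
      | cons u'' δ =>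
          rw [Path.comp_cons, Path.comp_cons] at h
          injection h with h1 h2 h3 h4
          subst h1
          rw [eq_of_heq h4]
          obtain ⟨s, hs1, hs2⟩ := ih u'' (eq_of_heq h3)
          exact ⟨s, hs1, by rw [hs2, Path.comp_cons]⟩

/-- Asymmetric version of the halyard injectivity, assuming `u.length ≤ r.length`. -/
lemma halyard_aux {V : Type} [Quiver V] {e b : V} (p : Quiver.Path e b)
    (w : Quiver.Path e e)
    {cu du : V} (u : Quiver.Path e cu) (α : cu ⟶ du)
    {cr dr : V} (r : Quiver.Path e cr) (β : cr ⟶ dr)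
    (hu : ∃ u' : Quiver.Path cu b, p = u.comp u')
    (hr : ∃ r' : Quiver.Path cr b, p = r.comp r')
    (hαu : ¬ ∃ ρ : Quiver.Path du b, p = (u.cons α).comp ρ)
    (hαuw : ∃ ρ : Quiver.Path du b, p = ((w.comp u).cons α).comp ρ)
    (hβrw : ∃ ρ : Quiver.Path dr b, p = ((w.comp r).cons β).comp ρ)
    (hle : u.length ≤ r.length) :
    cu = cr ∧ HEq u r := by
  obtain ⟨r', hr⟩ := hr
  obtain ⟨ρ, hρ⟩ := hαuw
  obtain ⟨ρ', hρ'⟩ := hβrw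
  rw [← Path.comp_cons] at hρ hρ'
  -- first show the lengths must be equal
  have hlen : u.length = r.length := by
    by_contra hne
    have hlt : u.length + 1 ≤ r.length := by omega
    -- then `α·u·w` is an initial subpath of `r·w`
    have hβrw' : p = (w.comp r).comp ((Path.nil.cons β).comp ρ') := by
      rw [hρ']; simp [← Path.comp_assoc, Path.comp_cons]
    obtain ⟨t, ht1, _⟩ := path_prefix_of_le (w.comp (u.cons α)) (w.comp r) ρ
      ((Path.nil.cons β).comp ρ') (hρ.symm.trans hβrw')
      (by simp [Path.length_comp, Path.length_cons]; omega)
    rw [Path.comp_assoc] at ht1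
    have hrt : r = (u.cons α).comp t := Path.comp_injective_right w ht1
    exact hαu ⟨t.comp r', by rw [hr, hrt, Path.comp_assoc]⟩
  -- now `u` and `r` are initial subpaths of `p` of the same length
  obtain ⟨u', hu⟩ := hu
  obtain ⟨s, hs1, _⟩ := path_prefix_of_le u r u' r' (hu.symm.trans hr) hle
  have hs0 : s.length = 0 := by
    have := congrArg Path.length hs1
    simp [Path.length_comp] at this
    omega
  cases s with
  | nil => exact ⟨rfl, by rw [hs1, Path.comp_nil]⟩
  | cons s' γ => simp [Path.length_cons] at hs0

/-- Injectivity of the slack-halyard assignment: let `p` be a path starting at `e` and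
`w` a path of positive length from `e` to `e`.  If `u, r` are initial subpaths of `p`
and `α, β` arrows such that `α·u` and `β·r` are not initial subpaths of `p` while
`α·u·w` and `β·r·w` are, then `u = r` and `α = β`. -/
theorem halyard_injective (V : Type) [Quiver V] (e b : V) (p : Quiver.Path e b)
    (w : Quiver.Path e e) (hw : 0 < w.length)
    (cu du : V) (u : Quiver.Path e cu) (α : cu ⟶ du)
    (cr dr : V) (r : Quiver.Path e cr) (β : cr ⟶ dr)
    (hu : ∃ u' : Quiver.Path cu b, p = u.comp u')
    (hr : ∃ r' : Quiver.Path cr b, p = r.comp r')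
    (hαu : ¬ ∃ ρ : Quiver.Path du b, p = (u.cons α).comp ρ)
    (hβr : ¬ ∃ ρ : Quiver.Path dr b, p = (r.cons β).comp ρ)
    (hαuw : ∃ ρ : Quiver.Path du b, p = ((w.comp u).cons α).comp ρ)
    (hβrw : ∃ ρ : Quiver.Path dr b, p = ((w.comp r).cons β).comp ρ) :
    cu = cr ∧ du = dr ∧ HEq u r ∧ HEq α β := by
  have hur : cu = cr ∧ HEq u r := by
    rcases le_total u.length r.length with hle | hle
    · exact halyard_aux p w u α r β hu hr hαu hαuw hβrw hle
    · obtain ⟨h1, h2⟩ := halyard_aux p w r β u α hr hu hβr hβrw hαuw hle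
      exact ⟨h1.symm, h2.symm⟩
  obtain ⟨hcc, huu⟩ := hur
  subst hcc
  rw [eq_of_heq huu] at hαuw ⊢
  -- both `α·r·w` and `β·r·w` are initial subpaths of `p`, of the same length
  obtain ⟨ρ, hρ⟩ := hαuw
  obtain ⟨ρ', hρ'⟩ := hβrw
  obtain ⟨t, ht1, _⟩ := path_prefix_of_le ((w.comp r).cons α) ((w.comp r).cons β) ρ ρ'
    (hρ.symm.trans hρ') (by simp [Path.length_cons])
  have ht0 : t.length = 0 := by
    have := congrArg Path.length ht1
    simp [Path.length_comp, Path.length_cons] at this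
    omega
  cases t with
  | nil =>
      rw [Path.comp_nil] at ht1
      exact ⟨rfl, rfl, HEq.rfl, Path.hom_heq_of_cons_eq_cons ht1.symm⟩
  | cons t' γ => simp [Path.length_cons] at ht0
end
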